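/- Let a > 3b > 0, and let V1, V2 be the two distinct positive roots V1 = (a + b + √(a² − 2ab − 3b²))/(2(a+b)(a−b)), V2 = (a + b − √(a² − 2ab − 3b²))/(2(a+b)(a−b)). Then the matrix I − M with M = [[2V1·a, 2V2·b],[2V1·b, 2V2·a]] has trace −2b/(a−b) < 0 and determinant (3b−a)/(a−b) < 0; hence I − M has one positive and one negative real eigenvalue. -/

import Mathlib

open Matrix

lemma char2_det (A : Matrix (Fin 2) (Fin 2) ℝ) (μ : ℝ) :
    Matrix.det (algebraMap ℝ (Matrix (Fin 2) (Fin 2) ℝ) μ - A)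
      = μ^2 - Matrix.trace A * μ + Matrix.det A := by
  rw [Algebra.algebraMap_eq_smul_one]
  simp [Matrix.det_fin_two, Matrix.trace_fin_two, Matrix.sub_apply, Matrix.smul_apply,
    Matrix.one_apply]
  ring

lemma mem_spectrum_of_char (A : Matrix (Fin 2) (Fin 2) ℝ) (μ : ℝ)
    (h : μ^2 - Matrix.trace A * μ + Matrix.det A = 0) : μ ∈ spectrum ℝ A := by
  rw [spectrum.mem_iff, Matrix.isUnit_iff_isUnit_det, isUnit_iff_ne_zero, ne_eq, not_not,
    char2_det, h]

theorem asymmetric_two_spike_instability (a b : ℝ) (hab : a > 3*b) (hb : b > 0)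
    (V1 V2 : ℝ)
    (hV1 : V1 = (a + b + Real.sqrt (a^2 - 2*a*b - 3*b^2)) / (2*(a+b)*(a-b)))
    (hV2 : V2 = (a + b - Real.sqrt (a^2 - 2*a*b - 3*b^2)) / (2*(a+b)*(a-b))) :
    let M : Matrix (Fin 2) (Fin 2) ℝ := !![2*V1*a, 2*V2*b; 2*V1*b, 2*V2*a]
    Matrix.trace (1 - M) = -2*b/(a - b) ∧
    Matrix.trace (1 - M) < 0 ∧
    Matrix.det (1 - M) = (3*b - a)/(a - b) ∧
    Matrix.det (1 - M) < 0 ∧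
    (∃ μ₁ μ₂ : ℝ, μ₁ > 0 ∧ μ₂ < 0 ∧
      μ₁ ∈ spectrum ℝ (1 - M) ∧ μ₂ ∈ spectrum ℝ (1 - M)) := by
  intro M
  have hapb : a + b > 0 := by linarith
  have hamb : a - b > 0 := by linarith
  have hdisc : a^2 - 2*a*b - 3*b^2 > 0 := by nlinarith
  set s := Real.sqrt (a^2 - 2*a*b - 3*b^2) with hs
  have hs2 : s^2 = a^2 - 2*a*b - 3*b^2 := Real.sq_sqrt (le_of_lt hdisc)
  have hne1 : (a+b) ≠ 0 := ne_of_gt hapb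
  have hne2 : (a-b) ≠ 0 := ne_of_gt hamb
  have hsum : V1 + V2 = 1/(a-b) := by
    rw [hV1, hV2]; field_simp; ring
  have hprod : V1 * V2 = b/((a+b)*(a-b)^2) := by
    rw [hV1, hV2]; field_simp
    linear_combination (-1) * hs2
  have htr : Matrix.trace (1 - M) = -2*b/(a - b) := by
    have key : (2:ℝ) - 2*a*(V1+V2) = -2*b/(a-b) := by
      rw [hsum]; field_simp; ring
    simp [M, Matrix.trace_fin_two, Matrix.sub_apply, Matrix.one_apply]
    linear_combination key
  have hdet : Matrix.det (1 - M) = (3*b - a)/(a - b) := by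
    have key : (1:ℝ) - 2*a*(V1+V2) + 4*(a^2-b^2)*(V1*V2) = (3*b-a)/(a-b) := by
      rw [hsum, hprod]; field_simp; ring
    simp [M, Matrix.det_fin_two, Matrix.sub_apply, Matrix.one_apply]
    linear_combination key
  have htrneg : Matrix.trace (1 - M) < 0 := by
    rw [htr]; apply div_neg_of_neg_of_pos <;> linarith
  have hdetneg : Matrix.det (1 - M) < 0 := by
    rw [hdet]; apply div_neg_of_neg_of_pos <;> linarith
  refine ⟨htr, htrneg, hdet, hdetneg, ?_⟩
  set t := Matrix.trace (1 - M) with ht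
  set d := Matrix.det (1 - M) with hd
  set r := Real.sqrt (t^2 - 4*d) with hr
  have hDpos : t^2 - 4*d > 0 := by nlinarith
  have hr2 : r^2 = t^2 - 4*d := Real.sq_sqrt (le_of_lt hDpos)
  have hrpos : r > 0 := Real.sqrt_pos.mpr hDpos
  have hrt : r > -t := by
    nlinarith [hr2, hrpos, htrneg]
  refine ⟨(t+r)/2, (t-r)/2, by linarith, by linarith, ?_, ?_⟩
  · exact mem_spectrum_of_char _ _ (by rw [← ht, ← hd]; linear_combination hr2/4)
  · exact mem_spectrum_of_char _ _ (by rw [← ht, ← hd]; linear_combination hr2/4)
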